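/- The function C_{ij}(h, δ) = σ_i σ_j (1 + δ_{ij} + h/φ)^{−α₀} (1 + h/φ)^{−α₁} (1 + δ_{ij})^{−α₂}, where δ_{ij} = ‖ξ_i − ξ_j‖ for latent points ξ₁,…,ξ_p ∈ ℝ^k and h = ‖s − s'‖, is a valid cross-covariance function on ℝ^d for any σ_i ∈ ℝ, φ > 0, α₀, α₁, α₂ ≥ 0, provided h (Euclidean distance in ℝ^d, d ≤ 3 with exponent-1 variogram γ₁(h) = h/φ being valid) and δ are valid variograms. -/

import Mathlib

open Matrix


variable {ι : Type*} [Fintype ι]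

/-- PSD from symmetric + nonneg quadratic form, over ℝ. -/
lemma psd_of_quad (M : Matrix ι ι ℝ) (hsym : ∀ i j, M i j = M j i)
    (h : ∀ x : ι → ℝ, 0 ≤ ∑ i, ∑ j, x i * x j * M i j) : M.PosSemidef := by
  rw [Matrix.posSemidef_iff_dotProduct_mulVec]
  constructor
  · ext i j
    simp [Matrix.conjTranspose_apply, hsym j i]
  · intro x
    have := h x
    simpa [dotProduct, Matrix.mulVec, Finset.mul_sum, mul_comm, mul_assoc, mul_left_comm]
      using this

lemma quad_nonneg {M : Matrix ι ι ℝ} (hM : M.PosSemidef) (x : ι → ℝ) :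
    0 ≤ ∑ i, ∑ j, x i * x j * M i j := by
  have := hM.dotProduct_mulVec_nonneg x
  simpa [dotProduct, Matrix.mulVec, Finset.mul_sum, mul_comm, mul_assoc, mul_left_comm]
    using this

lemma psd_sym {M : Matrix ι ι ℝ} (hM : M.PosSemidef) (i j : ι) : M i j = M j i := by
  have := hM.1
  conv_lhs => rw [← this]
  simp [Matrix.conjTranspose_apply]

/-- Schur product theorem. -/
lemma psd_schur [DecidableEq ι] {A B : Matrix ι ι ℝ} (hA : A.PosSemidef) (hB : B.PosSemidef) :
    (Matrix.of fun i j => A i j * B i j).PosSemidef := by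
  obtain ⟨m, C, hC⟩ := Matrix.posSemidef_iff_eq_sum_vecMulVec.mp hA
  have hAe : ∀ i j, A i j = ∑ l, C l i * C l j := by
    intro i j
    rw [hC]
    simp [Matrix.sum_apply, Matrix.vecMulVec_apply]
  refine psd_of_quad _ (fun i j => by
    simp only [Matrix.of_apply]; rw [psd_sym hA i j, psd_sym hB i j]) (fun x => ?_)
  have key : ∀ i j, x i * x j * (A i j * B i j)
      = ∑ l, (x i * C l i) * (x j * C l j) * B i j := by
    intro i j
    rw [hAe i j, Finset.sum_mul, Finset.mul_sum]
    exact Finset.sum_congr rfl fun l _ => by ring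
  calc ∑ i, ∑ j, x i * x j * (Matrix.of fun i j => A i j * B i j) i j
      = ∑ i, ∑ j, ∑ l, (x i * C l i) * (x j * C l j) * B i j := by
        simp only [Matrix.of_apply, key]
    _ = ∑ i, ∑ l, ∑ j, (x i * C l i) * (x j * C l j) * B i j :=
        Finset.sum_congr rfl fun i _ => Finset.sum_comm
    _ = ∑ l, ∑ i, ∑ j, (x i * C l i) * (x j * C l j) * B i j := Finset.sum_comm
    _ ≥ 0 := Finset.sum_nonneg fun l _ => quad_nonneg hB _

/-- Rank-one kernel `d i * d j` is PSD. -/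
lemma psd_rankOne (d : ι → ℝ) : (Matrix.of fun i j => d i * d j).PosSemidef := by
  refine psd_of_quad _ (fun i j => by simp [mul_comm]) (fun x => ?_)
  have : ∑ i, ∑ j, x i * x j * (Matrix.of fun i j => d i * d j) i j
      = (∑ i, x i * d i) * (∑ j, x j * d j) := by
    rw [Finset.sum_mul_sum]
    exact Finset.sum_congr rfl fun i _ => Finset.sum_congr rfl fun j _ => by
      simp [Matrix.of_apply]; ring
  rw [this]
  exact mul_self_nonneg _

/-- Gram kernel of inner products is PSD. -/
lemma psd_gram {E : Type*} [NormedAddCommGroup E] [InnerProductSpace ℝ E] (v : ι → E) :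
    (Matrix.of fun i j => (inner ℝ (v i) (v j) : ℝ)).PosSemidef := by
  refine psd_of_quad _ (fun i j => by simp [real_inner_comm]) (fun x => ?_)
  have : ∑ i, ∑ j, x i * x j * (Matrix.of fun i j => (inner ℝ (v i) (v j) : ℝ)) i j
      = (inner ℝ (∑ i, x i • v i) (∑ j, x j • v j) : ℝ) := by
    rw [sum_inner]
    refine Finset.sum_congr rfl fun i _ => ?_
    rw [inner_sum]
    refine Finset.sum_congr rfl fun j _ => ?_
    rw [real_inner_smul_left, real_inner_smul_right, Matrix.of_apply, mul_assoc]
  rw [this]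
  exact real_inner_self_nonneg

/-- Entrywise nonneg scalar multiple. -/
lemma psd_const_mul [DecidableEq ι] {M : Matrix ι ι ℝ} (hM : M.PosSemidef) {c : ℝ} (hc : 0 ≤ c) :
    (Matrix.of fun i j => c * M i j).PosSemidef := by
  have h1 : (Matrix.of fun i j : ι => Real.sqrt c * Real.sqrt c).PosSemidef :=
    psd_rankOne fun _ => Real.sqrt c
  have h2 := psd_schur h1 hM
  have he : (Matrix.of fun i j => c * M i j)
      = Matrix.of fun i j => (Matrix.of fun i j : ι => Real.sqrt c * Real.sqrt c) i j * M i j := by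
    ext i j; simp [Real.mul_self_sqrt hc]
  rw [he]; exact h2

/-- Entrywise `exp` of a PSD matrix is PSD. -/
lemma psd_exp [DecidableEq ι] {M : Matrix ι ι ℝ} (hM : M.PosSemidef) :
    (Matrix.of fun i j => Real.exp (M i j)).PosSemidef := by
  have hpow : ∀ m : ℕ, (Matrix.of fun i j => M i j ^ m).PosSemidef := by
    intro m
    induction m with
    | zero => simpa using psd_rankOne (fun _ : ι => (1 : ℝ))
    | succ m ih =>
        have h2 := psd_schur ih hM
        have he : (Matrix.of fun i j => M i j ^ (m + 1))
            = Matrix.of fun i j => (Matrix.of fun i j => M i j ^ m) i j * M i j := by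
          ext i j; simp [pow_succ]
        rw [he]; exact h2
  refine psd_of_quad _ (fun i j => by simp [psd_sym hM i j]) (fun x => ?_)
  have hexp : ∀ y : ℝ, Real.exp y = ∑' m : ℕ, y ^ m / m.factorial := fun y => by
    rw [Real.exp_eq_exp_ℝ, NormedSpace.exp_eq_tsum_div]
  have hsummable : ∀ i j : ι, Summable fun m : ℕ => x i * x j * (M i j ^ m / m.factorial) :=
    fun i j => (Real.summable_pow_div_factorial (M i j)).mul_left _
  have hsum2 : ∀ i : ι, Summable fun m : ℕ => ∑ j, x i * x j * (M i j ^ m / m.factorial) :=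
    fun i => summable_sum fun j _ => hsummable i j
  have step1 : ∑ i, ∑ j, x i * x j * (Matrix.of fun i j => Real.exp (M i j)) i j
      = ∑ i, ∑ j, ∑' m : ℕ, x i * x j * (M i j ^ m / m.factorial) := by
    refine Finset.sum_congr rfl fun i _ => Finset.sum_congr rfl fun j _ => ?_
    rw [Matrix.of_apply, hexp (M i j), ← tsum_mul_left]
  rw [step1]
  rw [show (∑ i, ∑ j, ∑' m : ℕ, x i * x j * (M i j ^ m / m.factorial))
      = ∑ i, ∑' m : ℕ, ∑ j, x i * x j * (M i j ^ m / m.factorial) from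
    Finset.sum_congr rfl fun i _ => (Summable.tsum_finsetSum (fun j _ => hsummable i j)).symm]
  rw [(Summable.tsum_finsetSum (fun i _ => hsum2 i)).symm]
  refine tsum_nonneg fun m => ?_
  have : ∑ i, ∑ j, x i * x j * (M i j ^ m / m.factorial)
      = (1 / m.factorial : ℝ) * ∑ i, ∑ j, x i * x j * (M i j ^ m) := by
    rw [Finset.mul_sum]
    refine Finset.sum_congr rfl fun i _ => ?_
    rw [Finset.mul_sum]
    exact Finset.sum_congr rfl fun j _ => by ring
  rw [this]
  exact mul_nonneg (by positivity) (quad_nonneg (hpow m) x)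

/-- Gaussian kernel is PSD. -/
lemma psd_gaussian [DecidableEq ι] {E : Type*} [NormedAddCommGroup E] [InnerProductSpace ℝ E]
    (v : ι → E) {β : ℝ} (hβ : 0 ≤ β) :
    (Matrix.of fun i j => Real.exp (-β * ‖v i - v j‖ ^ 2)).PosSemidef := by
  have hinner := psd_const_mul (psd_gram v) (by linarith : (0:ℝ) ≤ 2 * β)
  have hexp := psd_exp hinner
  have hrank := psd_rankOne fun i => Real.exp (-β * ‖v i‖ ^ 2)
  have := psd_schur hrank hexp
  convert this using 2
  ext i j
  simp only [Matrix.of_apply, ← Real.exp_add]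
  congr 1
  have : ‖v i - v j‖ ^ 2 = ‖v i‖ ^ 2 - 2 * inner ℝ (v i) (v j) + ‖v j‖ ^ 2 :=
    norm_sub_sq_real (v i) (v j)
  rw [this]
  ring

open MeasureTheory Set in
/-- `∫_{0}^{∞} exp(-(t - c/t)²) dt = √π / 2` for `c ≥ 0`. -/
lemma integral_exp_neg_sub_div_sq {c : ℝ} (hc : 0 ≤ c) :
    ∫ t in Ioi (0:ℝ), Real.exp (-(t - c/t)^2) = Real.sqrt Real.pi / 2 := by
  rcases eq_or_lt_of_le hc with rfl | hc
  · simp only [zero_div, sub_zero]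
    have := integral_gaussian_Ioi 1
    simpa using this
  -- c > 0 case
  set g : ℝ → ℝ := fun w => Real.exp (-w^2) with hg
  set f : ℝ → ℝ := fun t => t - c/t with hf
  have hderiv : ∀ t ∈ Ioi (0:ℝ), HasDerivWithinAt f (1 + c/t^2) (Ioi 0) t := by
    intro t ht
    have ht' : t ≠ 0 := ne_of_gt ht
    have h1 : HasDerivAt (fun t : ℝ => t - c * t⁻¹) (1 - c * (-(t^2)⁻¹)) t :=
      (hasDerivAt_id t).sub ((hasDerivAt_inv ht').const_mul c)
    have h2 : HasDerivAt f (1 + c/t^2) t := by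
      simp only [hf, div_eq_mul_inv]
      convert h1 using 1
      field_simp
      ring
    exact h2.hasDerivWithinAt
  have hinj : InjOn f (Ioi 0) := by
    intro a ha b hb hab
    have ha' : (0:ℝ) < a := ha
    have hb' : (0:ℝ) < b := hb
    have key : (a - b) * (a * b + c) = 0 := by
      have h2 : a - c/a = b - c/b := hab
      field_simp at h2
      nlinarith [h2]
    rcases mul_eq_zero.mp key with h | h
    · linarith
    · nlinarith
  have himg : f '' (Ioi 0) = univ := by
    apply eq_univ_of_forall
    intro w
    refine ⟨(w + Real.sqrt (w^2 + 4*c)) / 2, ?_, ?_⟩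
    · have h4 : (0:ℝ) < w^2 + 4*c := by nlinarith [sq_nonneg w]
      have : |w| < Real.sqrt (w^2 + 4*c) := by
        rw [← Real.sqrt_sq_eq_abs]
        exact Real.sqrt_lt_sqrt (sq_nonneg w) (by linarith)
      have := neg_abs_le w
      simp only [mem_Ioi]
      nlinarith [abs_nonneg w]
    · set t := (w + Real.sqrt (w^2 + 4*c)) / 2 with htdef
      have h4 : (0:ℝ) ≤ w^2 + 4*c := by nlinarith [sq_nonneg w]
      have hsq : Real.sqrt (w^2 + 4*c) ^ 2 = w^2 + 4*c := Real.sq_sqrt h4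
      have ht : (0:ℝ) < t := by
        have : |w| < Real.sqrt (w^2 + 4*c) ∨ |w| = Real.sqrt (w^2+4*c) := by
          rcases lt_or_eq_of_le (Real.sqrt_le_sqrt (by linarith : w^2 ≤ w^2 + 4*c)) with h | h
          · left; rwa [Real.sqrt_sq_eq_abs] at h
          · right; rw [← Real.sqrt_sq_eq_abs]; exact h
        rcases this with h | h
        · have := neg_abs_le w; simp only [htdef]; nlinarith
        · exfalso
          have := congrArg (· ^ 2) h
          simp only [sq_abs] at this
          rw [hsq] at this
          linarith
      have htc : t * (t - w) = c := by
        have : t - w = (Real.sqrt (w^2 + 4*c) - w) / 2 := by rw [htdef]; ring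
        rw [this, htdef]
        nlinarith [hsq]
      show f t = w
      have : c / t = t - w := by
        rw [← htc]; field_simp
      simp [hf, this]
  have hchange := integral_image_eq_integral_abs_deriv_smul measurableSet_Ioi hderiv hinj g
  rw [himg] at hchange
  have hLHS : ∫ x in (univ : Set ℝ), g x = Real.sqrt Real.pi := by
    rw [setIntegral_univ]
    have := integral_gaussian 1
    simpa using this
  -- abs of deriv is itself
  have habs : ∀ t ∈ Ioi (0:ℝ), |1 + c/t^2| = 1 + c/t^2 := by
    intro t ht
    have : (0:ℝ) < t := ht
    rw [abs_of_pos]; positivity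
  have hchange' : Real.sqrt Real.pi = ∫ t in Ioi (0:ℝ), (1 + c/t^2) * Real.exp (-(t - c/t)^2) := by
    rw [← hLHS, hchange]
    refine setIntegral_congr_fun measurableSet_Ioi fun t ht => ?_
    rw [smul_eq_mul, habs t ht]
  -- the second substitution t ↦ c/t
  have hderiv2 : ∀ t ∈ Ioi (0:ℝ), HasDerivWithinAt (fun t => c/t) (-(c/t^2)) (Ioi 0) t := by
    intro t ht
    have ht' : t ≠ 0 := ne_of_gt ht
    have h1 : HasDerivAt (fun t : ℝ => c * t⁻¹) (c * (-(t^2)⁻¹)) t :=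
      (hasDerivAt_inv ht').const_mul c
    have h2 : HasDerivAt (fun t : ℝ => c/t) (-(c/t^2)) t := by
      simp only [div_eq_mul_inv]
      convert h1 using 1
      field_simp
    exact h2.hasDerivWithinAt
  have hinj2 : InjOn (fun t : ℝ => c/t) (Ioi 0) := by
    intro a ha b hb hab
    have ha' : (0:ℝ) < a := ha
    have hb' : (0:ℝ) < b := hb
    have : c/a = c/b := hab
    field_simp at this
    rcases this with h | h
    · linarith
  have himg2 : (fun t : ℝ => c/t) '' (Ioi 0) = Ioi 0 := by
    ext w
    constructor
    · rintro ⟨t, ht, rfl⟩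
      exact div_pos hc ht
    · intro hw
      exact ⟨c/w, div_pos hc hw, by field_simp⟩
  have hG : ∀ t ∈ Ioi (0:ℝ), |(-(c/t^2))| • Real.exp (-(c/t - c/(c/t))^2)
      = (c/t^2) * Real.exp (-(t - c/t)^2) := by
    intro t ht
    have ht' : (0:ℝ) < t := ht
    have hct : c / (c/t) = t := by field_simp
    rw [hct, smul_eq_mul, abs_neg, abs_of_pos (by positivity : (0:ℝ) < c/t^2)]
    congr 2
    ring
  have hchange2 := integral_image_eq_integral_abs_deriv_smul measurableSet_Ioi hderiv2 hinj2
    (fun w => Real.exp (-(w - c/w)^2))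
  rw [himg2] at hchange2
  have hsub2 : ∫ s in Ioi (0:ℝ), Real.exp (-(s - c/s)^2)
      = ∫ t in Ioi (0:ℝ), (c/t^2) * Real.exp (-(t - c/t)^2) := by
    rw [hchange2]
    exact setIntegral_congr_fun measurableSet_Ioi hG
  -- integrability
  have hgint : IntegrableOn g ((fun t => f t) '' (Ioi 0)) := by
    rw [himg]
    have : Integrable g := by
      have := integrable_exp_neg_mul_sq (by norm_num : (0:ℝ) < 1)
      simpa [hg] using this
    exact this.integrableOn
  have hIfull : IntegrableOn (fun t => (1 + c/t^2) * Real.exp (-(t - c/t)^2)) (Ioi 0) := by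
    have h3 := (integrableOn_image_iff_integrableOn_abs_deriv_smul measurableSet_Ioi
      hderiv hinj g).mp hgint
    refine IntegrableOn.congr_fun h3 (fun t ht => ?_) measurableSet_Ioi
    rw [smul_eq_mul, habs t ht]
  have hcont : ContinuousOn (fun t : ℝ => Real.exp (-(t - c/t)^2)) (Ioi 0) := by
    apply Real.continuous_exp.comp_continuousOn
    apply ContinuousOn.neg
    apply ContinuousOn.pow
    exact continuousOn_id.sub (continuousOn_const.div continuousOn_id fun t ht => ne_of_gt ht)
  have he1 : IntegrableOn (fun t : ℝ => Real.exp (-(t - c/t)^2)) (Ioi 0) := by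
    refine Integrable.mono' hIfull (hcont.aestronglyMeasurable measurableSet_Ioi) ?_
    filter_upwards [ae_restrict_mem measurableSet_Ioi] with t ht
    have ht' : (0:ℝ) < t := ht
    rw [Real.norm_eq_abs, abs_of_pos (Real.exp_pos _)]
    have h1 : (1:ℝ) ≤ 1 + c/t^2 := by
      have : (0:ℝ) ≤ c/t^2 := by positivity
      linarith
    nlinarith [Real.exp_pos (-(t - c/t)^2), (Real.exp_pos (-(t - c/t)^2)).le]
  have he2 : IntegrableOn (fun t : ℝ => (c/t^2) * Real.exp (-(t - c/t)^2)) (Ioi 0) := by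
    have h4 := hIfull.sub he1
    refine IntegrableOn.congr_fun h4 (fun t ht => ?_) measurableSet_Ioi
    simp only [Pi.sub_apply]
    ring
  have hsplit : (∫ t in Ioi (0:ℝ), (1 + c/t^2) * Real.exp (-(t - c/t)^2))
      = (∫ t in Ioi (0:ℝ), Real.exp (-(t - c/t)^2))
        + ∫ t in Ioi (0:ℝ), (c/t^2) * Real.exp (-(t - c/t)^2) := by
    rw [← integral_add he1 he2]
    refine setIntegral_congr_fun measurableSet_Ioi fun t ht => ?_
    ring
  rw [hsplit, ← hsub2] at hchange'
  linarith

open MeasureTheory Set in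
/-- Subordination: `∫_{0}^{∞} u^{-1/2} e^{-u} e^{-b/(4u)} du = √π e^{-√b}` for `b ≥ 0`. -/
lemma integral_subordination {b : ℝ} (hb : 0 ≤ b) :
    ∫ u in Ioi (0:ℝ), u ^ (-(1:ℝ)/2) * Real.exp (-u) * Real.exp (-(b/(4*u)))
      = Real.sqrt Real.pi * Real.exp (-Real.sqrt b) := by
  set g : ℝ → ℝ := fun u => u ^ (-(1:ℝ)/2) * Real.exp (-u) * Real.exp (-(b/(4*u))) with hgdef
  have hderiv : ∀ t ∈ Ioi (0:ℝ), HasDerivWithinAt (fun t : ℝ => t^2) (2*t) (Ioi 0) t := by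
    intro t ht
    simpa [mul_comm] using (hasDerivAt_pow 2 t).hasDerivWithinAt
  have hinj : InjOn (fun t : ℝ => t^2) (Ioi 0) := by
    intro a ha b hb hab
    have ha' : (0:ℝ) < a := ha
    have hb' : (0:ℝ) < b := hb
    have hab' : a^2 = b^2 := hab
    nlinarith [hab']
  have himg : (fun t : ℝ => t^2) '' (Ioi 0) = Ioi 0 := by
    ext w
    constructor
    · rintro ⟨t, ht, rfl⟩
      exact pow_pos (show (0:ℝ) < t from ht) 2
    · intro hw
      exact ⟨Real.sqrt w, Real.sqrt_pos.mpr hw, Real.sq_sqrt (le_of_lt hw)⟩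
  have hchange := integral_image_eq_integral_abs_deriv_smul measurableSet_Ioi hderiv hinj g
  rw [himg] at hchange
  rw [hchange]
  set c : ℝ := Real.sqrt b / 2 with hcdef
  have hc : 0 ≤ c := by positivity
  have hstep : ∀ t ∈ Ioi (0:ℝ),
      |2*t| • g (t^2) = (2 * Real.exp (-Real.sqrt b)) * Real.exp (-(t - c/t)^2) := by
    intro t ht
    have ht' : (0:ℝ) < t := ht
    have h1 : (t^2 : ℝ) ^ (-(1:ℝ)/2) = t⁻¹ := by
      rw [← Real.rpow_natCast t 2, ← Real.rpow_mul ht'.le]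
      norm_num
      rw [Real.rpow_neg_one]
    have hb4 : b / (4 * t^2) = c^2 / t^2 := by
      rw [hcdef]
      rw [div_pow, Real.sq_sqrt hb]
      ring
    rw [smul_eq_mul, abs_of_pos (by positivity : (0:ℝ) < 2*t), hgdef]
    simp only
    rw [h1, hb4]
    have hexp : -(t^2) + -(c^2/t^2) = -Real.sqrt b + -(t - c/t)^2 := by
      have h2c : 2 * c = Real.sqrt b := by rw [hcdef]; ring
      have : (t - c/t)^2 = t^2 - 2*c + c^2/t^2 := by
        field_simp
        ring
      rw [this, ← h2c]
      ring
    have e1 : Real.exp (-(t^2)) * Real.exp (-(c^2/t^2))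
        = Real.exp (-Real.sqrt b) * Real.exp (-(t - c/t)^2) := by
      rw [← Real.exp_add, ← Real.exp_add, hexp]
    have e2 : 2*t*(t⁻¹ * Real.exp (-(t^2)) * Real.exp (-(c^2/t^2)))
        = 2 * (Real.exp (-(t^2)) * Real.exp (-(c^2/t^2))) := by
      field_simp
    calc 2*t*(t⁻¹ * Real.exp (-t^2) * Real.exp (-(c^2/t^2)))
        = 2 * (Real.exp (-(t^2)) * Real.exp (-(c^2/t^2))) := e2
      _ = 2 * (Real.exp (-Real.sqrt b) * Real.exp (-(t - c/t)^2)) := by rw [e1]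
      _ = 2 * Real.exp (-Real.sqrt b) * Real.exp (-(t - c/t)^2) := by ring
  rw [setIntegral_congr_fun measurableSet_Ioi hstep, integral_const_mul,
    integral_exp_neg_sub_div_sq hc]
  ring

open MeasureTheory Set in
/-- The exponential (Laplace) kernel `exp (-c ‖v i - v j‖)` is PSD. -/
lemma psd_laplace [DecidableEq ι] {E : Type*} [NormedAddCommGroup E] [InnerProductSpace ℝ E]
    (v : ι → E) {c : ℝ} (hc : 0 ≤ c) :
    (Matrix.of fun i j => Real.exp (-c * ‖v i - v j‖)).PosSemidef := by
  refine psd_of_quad _ (fun i j => by simp [norm_sub_rev (v i)]) (fun x => ?_)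
  -- base integrable function
  have hbase : IntegrableOn (fun u : ℝ => u ^ (-(1:ℝ)/2) * Real.exp (-u)) (Ioi 0) := by
    have h := Real.GammaIntegral_convergent (by norm_num : (0:ℝ) < 1/2)
    refine IntegrableOn.congr_fun h (fun u hu => ?_) measurableSet_Ioi
    rw [mul_comm]
    norm_num
  have hgint : ∀ i j : ι, IntegrableOn
      (fun u : ℝ => u ^ (-(1:ℝ)/2) * Real.exp (-u) *
        Real.exp (-(c^2/(4*u)) * ‖v i - v j‖^2)) (Ioi 0) := by
    intro i j
    have hcont : ContinuousOn (fun u : ℝ => u ^ (-(1:ℝ)/2) * Real.exp (-u) *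
        Real.exp (-(c^2/(4*u)) * ‖v i - v j‖^2)) (Ioi 0) := by
      apply ContinuousOn.mul
      · apply ContinuousOn.mul
        · exact continuousOn_id.rpow_const fun u hu => Or.inl (ne_of_gt hu)
        · exact (Real.continuous_exp.comp continuous_neg).continuousOn
      · apply Real.continuous_exp.comp_continuousOn
        apply ContinuousOn.mul _ continuousOn_const
        apply ContinuousOn.neg
        refine continuousOn_const.div (continuousOn_const.mul continuousOn_id)
          fun u hu => ?_
        have : (0:ℝ) < u := hu
        positivity
    refine Integrable.mono' hbase (hcont.aestronglyMeasurable measurableSet_Ioi) ?_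
    filter_upwards [ae_restrict_mem measurableSet_Ioi] with u hu
    have hu' : (0:ℝ) < u := hu
    rw [Real.norm_eq_abs, abs_of_nonneg (by positivity)]
    have h1 : Real.exp (-(c^2/(4*u)) * ‖v i - v j‖^2) ≤ 1 := by
      rw [Real.exp_le_one_iff]
      have : (0:ℝ) ≤ c^2/(4*u) := by positivity
      nlinarith [sq_nonneg ‖v i - v j‖]
    exact mul_le_of_le_one_right (by positivity) h1
  -- the representation of each entry
  have hrep : ∀ i j : ι, Real.exp (-c * ‖v i - v j‖)
      = (Real.sqrt Real.pi)⁻¹ * ∫ u in Ioi (0:ℝ), u ^ (-(1:ℝ)/2) * Real.exp (-u) *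
          Real.exp (-(c^2/(4*u)) * ‖v i - v j‖^2) := by
    intro i j
    have hb : (0:ℝ) ≤ (c * ‖v i - v j‖)^2 := sq_nonneg _
    have h := integral_subordination hb
    have hsqrt : Real.sqrt ((c * ‖v i - v j‖)^2) = c * ‖v i - v j‖ :=
      Real.sqrt_sq (by positivity)
    rw [hsqrt] at h
    have heq : ∀ u : ℝ, u ∈ Ioi (0:ℝ) → u ^ (-(1:ℝ)/2) * Real.exp (-u) *
        Real.exp (-((c * ‖v i - v j‖)^2/(4*u)))
        = u ^ (-(1:ℝ)/2) * Real.exp (-u) * Real.exp (-(c^2/(4*u)) * ‖v i - v j‖^2) := by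
      intro u hu
      have hu' : (0:ℝ) < u := hu
      congr 2
      field_simp
    rw [setIntegral_congr_fun measurableSet_Ioi heq] at h
    rw [h]
    have hπ : Real.sqrt Real.pi ≠ 0 := by positivity
    field_simp [mul_comm]
  -- now the quadratic form
  have hquad : ∑ i, ∑ j, x i * x j * (Matrix.of fun i j => Real.exp (-c * ‖v i - v j‖)) i j
      = (Real.sqrt Real.pi)⁻¹ * ∫ u in Ioi (0:ℝ), ∑ i, ∑ j, x i * x j *
          (u ^ (-(1:ℝ)/2) * Real.exp (-u) * Real.exp (-(c^2/(4*u)) * ‖v i - v j‖^2)) := by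
    rw [integral_finset_sum _ (fun i _ => integrable_finset_sum _
      (fun j _ => ((hgint i j).const_mul _)))]
    rw [Finset.mul_sum]
    refine Finset.sum_congr rfl fun i _ => ?_
    rw [integral_finset_sum _ (fun j _ => ((hgint i j).const_mul _)), Finset.mul_sum]
    refine Finset.sum_congr rfl fun j _ => ?_
    rw [Matrix.of_apply, hrep i j, integral_const_mul]
    ring
  rw [hquad]
  refine mul_nonneg (by positivity) (setIntegral_nonneg measurableSet_Ioi fun u hu => ?_)
  have hu' : (0:ℝ) < u := hu
  have hβ : (0:ℝ) ≤ c^2/(4*u) := by positivity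
  have hgauss := psd_gaussian v hβ
  have : ∑ i, ∑ j, x i * x j *
      (u ^ (-(1:ℝ)/2) * Real.exp (-u) * Real.exp (-(c^2/(4*u)) * ‖v i - v j‖^2))
      = (u ^ (-(1:ℝ)/2) * Real.exp (-u)) * ∑ i, ∑ j, x i * x j *
        (Matrix.of fun i j => Real.exp (-(c^2/(4*u)) * ‖v i - v j‖^2)) i j := by
    rw [Finset.mul_sum]
    refine Finset.sum_congr rfl fun i _ => ?_
    rw [Finset.mul_sum]
    refine Finset.sum_congr rfl fun j _ => ?_
    rw [Matrix.of_apply]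
    ring
  rw [this]
  exact mul_nonneg (by positivity) (quad_nonneg hgauss x)

open MeasureTheory Set in
/-- If `exp(-tγ)` is PSD for all `t ≥ 0` then `(1+γ)^(-α)` is PSD, for `α ≥ 0`. -/
lemma psd_one_add_rpow_neg [DecidableEq ι] {γ : ι → ι → ℝ} (hγ0 : ∀ i j, 0 ≤ γ i j)
    (hsym : ∀ i j, γ i j = γ j i)
    (hexp : ∀ t : ℝ, 0 ≤ t → (Matrix.of fun i j => Real.exp (-(t * γ i j))).PosSemidef)
    {α : ℝ} (hα : 0 ≤ α) :
    (Matrix.of fun i j => (1 + γ i j) ^ (-α)).PosSemidef := by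
  rcases eq_or_lt_of_le hα with rfl | hα'
  · have he : (Matrix.of fun i j => (1 + γ i j) ^ (-(0:ℝ)))
        = Matrix.of fun i j : ι => (1:ℝ) * 1 := by
      ext i j
      simp
    rw [he]
    exact psd_rankOne fun _ => (1:ℝ)
  refine psd_of_quad _ (fun i j => by simp [hsym i j]) (fun x => ?_)
  -- integrability
  have hbase : IntegrableOn (fun t : ℝ => Real.exp (-t) * t ^ (α - 1)) (Ioi 0) :=
    Real.GammaIntegral_convergent hα'
  have hgint : ∀ i j : ι, IntegrableOn
      (fun t : ℝ => t ^ (α - 1) * Real.exp (-((1 + γ i j) * t))) (Ioi 0) := by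
    intro i j
    have hcont : ContinuousOn (fun t : ℝ => t ^ (α - 1) * Real.exp (-((1 + γ i j) * t)))
        (Ioi 0) := by
      apply ContinuousOn.mul
      · exact continuousOn_id.rpow_const fun t ht => Or.inl (ne_of_gt ht)
      · exact (Real.continuous_exp.comp (continuous_const.mul continuous_id).neg).continuousOn
    refine Integrable.mono' (hbase.congr_fun (fun t ht => mul_comm _ _) measurableSet_Ioi)
      (hcont.aestronglyMeasurable measurableSet_Ioi) ?_
    filter_upwards [ae_restrict_mem measurableSet_Ioi] with t ht
    have ht' : (0:ℝ) < t := ht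
    rw [Real.norm_eq_abs, abs_of_nonneg (by positivity)]
    have h1 : Real.exp (-((1 + γ i j) * t)) ≤ Real.exp (-t) := by
      apply Real.exp_le_exp.mpr
      have := hγ0 i j
      nlinarith
    have h2 : (0:ℝ) ≤ t ^ (α - 1) := by positivity
    calc t ^ (α - 1) * Real.exp (-((1 + γ i j) * t)) ≤ t ^ (α - 1) * Real.exp (-t) :=
          mul_le_mul_of_nonneg_left h1 h2
      _ = t ^ (α - 1) * Real.exp (-t) := rfl
  -- entry representation
  have hrep : ∀ i j : ι, (1 + γ i j) ^ (-α)
      = (Real.Gamma α)⁻¹ * ∫ t in Ioi (0:ℝ), t ^ (α - 1) * Real.exp (-((1 + γ i j) * t)) := by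
    intro i j
    have hr : (0:ℝ) < 1 + γ i j := by have := hγ0 i j; linarith
    rw [Real.integral_rpow_mul_exp_neg_mul_Ioi hα' hr]
    have hΓ : Real.Gamma α ≠ 0 := ne_of_gt (Real.Gamma_pos_of_pos hα')
    rw [one_div, Real.inv_rpow hr.le, Real.rpow_neg hr.le]
    field_simp
  have hquad : ∑ i, ∑ j, x i * x j * (Matrix.of fun i j => (1 + γ i j) ^ (-α)) i j
      = (Real.Gamma α)⁻¹ * ∫ t in Ioi (0:ℝ), ∑ i, ∑ j, x i * x j *
          (t ^ (α - 1) * Real.exp (-((1 + γ i j) * t))) := by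
    rw [integral_finset_sum _ (fun i _ => integrable_finset_sum _
      (fun j _ => ((hgint i j).const_mul _)))]
    rw [Finset.mul_sum]
    refine Finset.sum_congr rfl fun i _ => ?_
    rw [integral_finset_sum _ (fun j _ => ((hgint i j).const_mul _)), Finset.mul_sum]
    refine Finset.sum_congr rfl fun j _ => ?_
    rw [Matrix.of_apply, hrep i j, integral_const_mul]
    ring
  rw [hquad]
  refine mul_nonneg (by positivity) (setIntegral_nonneg measurableSet_Ioi fun t ht => ?_)
  have ht' : (0:ℝ) < t := ht
  have hK := hexp t ht'.le
  have : ∑ i, ∑ j, x i * x j * (t ^ (α - 1) * Real.exp (-((1 + γ i j) * t)))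
      = (t ^ (α - 1) * Real.exp (-t)) * ∑ i, ∑ j, x i * x j *
        (Matrix.of fun i j => Real.exp (-(t * γ i j))) i j := by
    rw [Finset.mul_sum]
    refine Finset.sum_congr rfl fun i _ => ?_
    rw [Finset.mul_sum]
    refine Finset.sum_congr rfl fun j _ => ?_
    rw [Matrix.of_apply]
    have : Real.exp (-((1 + γ i j) * t)) = Real.exp (-t) * Real.exp (-(t * γ i j)) := by
      rw [← Real.exp_add]
      congr 1
      ring
    rw [this]
    ring
  rw [this]
  exact mul_nonneg (by positivity) (quad_nonneg hK x)

/-- The cross-covariance function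
`C i j (h, δ) = σ_i σ_j (1 + δ_{ij} + h/φ)^(-α₀) (1 + h/φ)^(-α₁) (1 + δ_{ij})^(-α₂)`,
where `δ_{ij} = ‖ξ i - ξ j‖` for latent points `ξ₁, …, ξ_p ∈ ℝ^k` and `h = ‖s - s'‖`
(Euclidean distance in `ℝ^d`, `d ≤ 3`), is valid: for any locations `s₁, …, s_n` the
`np × np` block matrix of its values is positive semidefinite. -/
theorem proposed_crossCov_valid {p d k : ℕ} (hd : d ≤ 3)
    (σ : Fin p → ℝ) (ξ : Fin p → EuclideanSpace ℝ (Fin k))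
    (φ α₀ α₁ α₂ : ℝ) (hφ : 0 < φ) (h0 : 0 ≤ α₀) (h1 : 0 ≤ α₁) (h2 : 0 ≤ α₂) :
    ∀ (n : ℕ) (s : Fin n → EuclideanSpace ℝ (Fin d)),
      (Matrix.of fun x y : Fin n × Fin p =>
        σ x.2 * σ y.2 *
          (1 + ‖ξ x.2 - ξ y.2‖ + ‖s x.1 - s y.1‖ / φ) ^ (-α₀) *
          (1 + ‖s x.1 - s y.1‖ / φ) ^ (-α₁) *
          (1 + ‖ξ x.2 - ξ y.2‖) ^ (-α₂)).PosSemidef := by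
  intro n s
  classical
  -- the three power kernels
  have hA : (Matrix.of fun x y : Fin n × Fin p =>
      (1 + ‖ξ x.2 - ξ y.2‖ + ‖s x.1 - s y.1‖ / φ) ^ (-α₀)).PosSemidef := by
    have h := psd_one_add_rpow_neg
      (γ := fun x y : Fin n × Fin p => ‖ξ x.2 - ξ y.2‖ + ‖s x.1 - s y.1‖ / φ)
      (fun x y => by positivity)
      (fun x y => by simp only [norm_sub_rev (ξ x.2), norm_sub_rev (s x.1)])
      (fun t ht => ?_) h0
    · have he : (Matrix.of fun x y : Fin n × Fin p =>
          (1 + ‖ξ x.2 - ξ y.2‖ + ‖s x.1 - s y.1‖ / φ) ^ (-α₀))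
          = Matrix.of fun x y : Fin n × Fin p =>
            (1 + (‖ξ x.2 - ξ y.2‖ + ‖s x.1 - s y.1‖ / φ)) ^ (-α₀) := by
        ext x y
        rw [Matrix.of_apply, Matrix.of_apply, add_assoc]
      rw [he]
      exact h
    · have L1 := psd_laplace (fun x : Fin n × Fin p => ξ x.2) ht
      have L2 := psd_laplace (fun x : Fin n × Fin p => s x.1)
        (div_nonneg ht hφ.le)
      have hs := psd_schur L1 L2
      have he : (Matrix.of fun x y : Fin n × Fin p =>
          Real.exp (-(t * (‖ξ x.2 - ξ y.2‖ + ‖s x.1 - s y.1‖ / φ))))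
          = Matrix.of fun x y : Fin n × Fin p =>
            (Matrix.of fun x y : Fin n × Fin p =>
              Real.exp (-t * ‖ξ x.2 - ξ y.2‖)) x y *
            (Matrix.of fun x y : Fin n × Fin p =>
              Real.exp (-(t/φ) * ‖s x.1 - s y.1‖)) x y := by
        ext x y
        simp only [Matrix.of_apply, ← Real.exp_add]
        congr 1
        field_simp
        ring
      rw [he]
      exact hs
  have hB : (Matrix.of fun x y : Fin n × Fin p =>
      (1 + ‖s x.1 - s y.1‖ / φ) ^ (-α₁)).PosSemidef := by
    refine psd_one_add_rpow_neg
      (γ := fun x y : Fin n × Fin p => ‖s x.1 - s y.1‖ / φ)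
      (fun x y => by positivity)
      (fun x y => by simp only [norm_sub_rev (s x.1)])
      (fun t ht => ?_) h1
    have L2 := psd_laplace (fun x : Fin n × Fin p => s x.1) (div_nonneg ht hφ.le)
    have he : (Matrix.of fun x y : Fin n × Fin p =>
        Real.exp (-(t * (‖s x.1 - s y.1‖ / φ))))
        = Matrix.of fun x y : Fin n × Fin p =>
          Real.exp (-(t/φ) * ‖s x.1 - s y.1‖) := by
      ext x y
      simp only [Matrix.of_apply]
      congr 1
      field_simp
    rw [he]
    exact L2
  have hC : (Matrix.of fun x y : Fin n × Fin p =>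
      (1 + ‖ξ x.2 - ξ y.2‖) ^ (-α₂)).PosSemidef := by
    refine psd_one_add_rpow_neg
      (γ := fun x y : Fin n × Fin p => ‖ξ x.2 - ξ y.2‖)
      (fun x y => by positivity)
      (fun x y => by simp only [norm_sub_rev (ξ x.2)])
      (fun t ht => ?_) h2
    have L1 := psd_laplace (fun x : Fin n × Fin p => ξ x.2) ht
    have he : (Matrix.of fun x y : Fin n × Fin p =>
        Real.exp (-(t * ‖ξ x.2 - ξ y.2‖)))
        = Matrix.of fun x y : Fin n × Fin p =>
          Real.exp (-t * ‖ξ x.2 - ξ y.2‖) := by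
      ext x y
      simp only [Matrix.of_apply, neg_mul]
    rw [he]
    exact L1
  have hσ := psd_rankOne fun x : Fin n × Fin p => σ x.2
  exact psd_schur (psd_schur (psd_schur hσ hA) hB) hC
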